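/- With H(ζ) = Σ_{m>0, k∤m} A_m ζ^m holomorphic near the closed disc of radius 2, k ≥ 2, λ ∈ ℂ*, and F_n defined by F_n(ζ) = Σ_{0≤j<n} λ^{−j−1} (H(ζ^{k^j}) − H(ζ^{k^j} e^{−2πi k^{j−n}})): for every ν ≥ 1 with k ∤ ν and every n ≥ 1, the Taylor coefficient of F_n at index ν k^{n−1} equals λ^{−n} A_ν (1 − exp(−2πiν/k)). In particular, |F̂_n(ν k^{n−1})| ≥ |λ|^{−n} |A_ν| / k when A_ν ≠ 0. -/

import Mathlib

/-- `G_{n,j}(ζ) = H(ζ^{k^j}) − H(ζ^{k^j} exp(−2πi k^{j−n}))`. -/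
noncomputable def Gfun (H : ℂ → ℂ) (k n j : ℕ) (ζ : ℂ) : ℂ :=
  H (ζ ^ k ^ j) -
    H (ζ ^ k ^ j * Complex.exp (-2 * Real.pi * Complex.I / (k:ℂ) ^ (n - j)))

/-- `F_n(ζ) = Σ_{0 ≤ j < n} λ^{−j−1} G_{n,j}(ζ)`. -/
noncomputable def Ffun (H : ℂ → ℂ) (k : ℕ) (lam : ℂ) (n : ℕ) (ζ : ℂ) : ℂ :=
  ∑ j ∈ Finset.range n, lam⁻¹ ^ (j + 1) * Gfun H k n j ζ

set_option maxHeartbeats 1000000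

open Complex

lemma aux_hasFPS {a : ℕ → ℂ} {f : ℂ → ℂ} {r : ℝ} (hr : 0 < r)
    (ha : ∀ ζ : ℂ, ‖ζ‖ < r → HasSum (fun s => a s * ζ ^ s) (f ζ)) :
    HasFPowerSeriesOnBall f (FormalMultilinearSeries.ofScalars ℂ a) 0 (ENNReal.ofReal r) := by
  constructor
  · refine ENNReal.le_of_forall_nnreal_lt fun t ht => ?_
    have htr : (t : ℝ) < r := by
      rwa [← ENNReal.ofReal_coe_nnreal, ENNReal.ofReal_lt_ofReal_iff hr] at ht
    have hs := (ha ((t : ℝ) : ℂ) (by simpa using lt_of_le_of_lt (le_abs_self _) (by simpa using htr))).summable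
    have h0 := (hs.tendsto_atTop_zero).norm
    rw [norm_zero] at h0
    apply FormalMultilinearSeries.le_radius_of_tendsto (l := 0)
    have heq : (fun s : ℕ => ‖FormalMultilinearSeries.ofScalars ℂ a s‖ * (t : ℝ) ^ s)
        = fun s : ℕ => ‖a s * ((t : ℝ) : ℂ) ^ s‖ := by
      funext s
      rw [FormalMultilinearSeries.ofScalars_norm, norm_mul, norm_pow, Complex.norm_real,
        Real.norm_eq_abs, NNReal.abs_eq t]
    rw [heq]
    exact h0
  · exact ENNReal.ofReal_pos.2 hr
  · intro y hy
    have hy' : ‖y‖ < r := by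
      rwa [EMetric.mem_ball, edist_zero_right, ← ofReal_norm,
        ENNReal.ofReal_lt_ofReal_iff hr] at hy
    have h2 : (fun n => FormalMultilinearSeries.ofScalars ℂ a n fun _ => y)
        = fun s => a s * y ^ s := by
      funext s; rw [FormalMultilinearSeries.ofScalars_apply_eq, smul_eq_mul]
    rw [zero_add, h2]
    exact ha y hy'

lemma aux_coeff_unique {a b : ℕ → ℂ} {f : ℂ → ℂ} {r : ℝ} (hr : 0 < r)
    (ha : ∀ ζ : ℂ, ‖ζ‖ < r → HasSum (fun s => a s * ζ ^ s) (f ζ))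
    (hb : ∀ ζ : ℂ, ‖ζ‖ < r → HasSum (fun s => b s * ζ ^ s) (f ζ)) :
    a = b := by
  have h := (aux_hasFPS hr ha).hasFPowerSeriesAt.eq_formalMultilinearSeries
    (aux_hasFPS hr hb).hasFPowerSeriesAt
  exact (FormalMultilinearSeries.ofScalars_series_eq_iff ℂ a b).mp h

lemma aux_one_sub_bound {k : ℕ} (hk : 2 ≤ k) {z : ℂ} (hzk : z ^ k = 1) (hz : z ≠ 1) :
    1 / (k : ℝ) ≤ ‖1 - z‖ := by
  have hk0 : (0 : ℝ) < k := by positivity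
  have habs : ‖z‖ = 1 := by
    have h1 : ‖z‖ ^ k = 1 := by rw [← norm_pow, hzk, norm_one]
    rcases lt_trichotomy (‖z‖) 1 with h | h | h
    · exact absurd h1 (by nlinarith [pow_lt_one₀ (norm_nonneg z) h (by omega : k ≠ 0)])
    · exact h
    · exact absurd h1 (by nlinarith [one_lt_pow₀ h (by omega : k ≠ 0)])
  have hgeom : ∑ j ∈ Finset.range k, z ^ j = 0 := by
    rw [geom_sum_eq hz, hzk]; simp
  have hsum : ((k : ℂ)) = ∑ j ∈ Finset.range k, (1 - z ^ j) := by
    rw [Finset.sum_sub_distrib, hgeom]; simp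
  have hterm : ∀ j ∈ Finset.range k, ‖1 - z ^ j‖ ≤ k * ‖1 - z‖ := by
    intro j hj
    have hid : 1 - z ^ j = (1 - z) * ∑ i ∈ Finset.range j, z ^ i := by
      have := geom_sum_mul z j
      linear_combination this
    rw [hid, norm_mul]
    have : ‖∑ i ∈ Finset.range j, z ^ i‖ ≤ (k : ℝ) := by
      calc ‖∑ i ∈ Finset.range j, z ^ i‖ ≤ ∑ i ∈ Finset.range j, ‖z ^ i‖ :=
            norm_sum_le _ _
        _ = j := by simp [map_pow, habs]
        _ ≤ k := by exact_mod_cast Nat.le_of_lt (Finset.mem_range.mp hj)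
    calc ‖1 - z‖ * ‖∑ i ∈ Finset.range j, z ^ i‖
        ≤ ‖1 - z‖ * k := by
          exact mul_le_mul_of_nonneg_left this (norm_nonneg _)
      _ = k * ‖1 - z‖ := by ring
  have hle : (k : ℝ) ≤ k * k * ‖1 - z‖ := by
    calc (k : ℝ) = ‖(k : ℂ)‖ := by simp
      _ = ‖∑ j ∈ Finset.range k, (1 - z ^ j)‖ := by rw [← hsum]
      _ ≤ ∑ j ∈ Finset.range k, ‖1 - z ^ j‖ := norm_sum_le _ _
      _ ≤ ∑ j ∈ Finset.range k, (k : ℝ) * ‖1 - z‖ := Finset.sum_le_sum hterm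
      _ = k * k * ‖1 - z‖ := by simp [Finset.sum_const]; ring
  rw [div_le_iff₀ hk0]
  nlinarith

/-- Lemma 4.8: with `H(ζ) = Σ_{m>0, k∤m} A_m ζ^m` and `B n s` the `s`-th Taylor coefficient
of `F_n` at `0`, for every `ν ≥ 1` with `k ∤ ν` and every `n ≥ 1`,
`F̂_n(ν k^{n−1}) = λ^{−n} A_ν (1 − exp(−2πiν/k))`; in particular
`|F̂_n(ν k^{n−1})| ≥ |λ|^{−n} |A_ν| / k`. -/
theorem F_coefficient_formula (k : ℕ) (hk : 2 ≤ k) (lam : ℂ) (hlam : lam ≠ 0)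
    (A : ℕ → ℂ) (hA : ∀ m : ℕ, k ∣ m → A m = 0)
    (H : ℂ → ℂ) (hH : ∀ ζ : ℂ, ‖ζ‖ < 1 → HasSum (fun m : ℕ => A m * ζ ^ m) (H ζ))
    (r : ℝ) (hr0 : 0 < r) (hr1 : r < 1)
    (B : ℕ → ℕ → ℂ)
    (hB : ∀ n : ℕ, ∀ ζ : ℂ, ‖ζ‖ < r →
      HasSum (fun s : ℕ => B n s * ζ ^ s) (Ffun H k lam n ζ)) :
    ∀ ν : ℕ, 1 ≤ ν → ¬ (k ∣ ν) → ∀ n : ℕ, 1 ≤ n →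
      B n (ν * k ^ (n - 1)) =
        lam⁻¹ ^ n * A ν * (1 - Complex.exp (-2 * Real.pi * Complex.I * ν / k)) ∧
      (‖lam‖)⁻¹ ^ n * ‖A ν‖ / k ≤
        ‖B n (ν * k ^ (n - 1))‖ := by
  intro ν hν hkν n hn
  have hk0 : 0 < k := by omega
  have hkC : (k : ℂ) ≠ 0 := Nat.cast_ne_zero.mpr (by omega)
  -- the explicit coefficient sequence
  set w : ℕ → ℂ := fun j => Complex.exp (-2 * Real.pi * Complex.I / (k:ℂ) ^ (n - j)) with hw
  set c : ℕ → ℂ := fun s => ∑ j ∈ Finset.range n, lam⁻¹ ^ (j + 1) *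
      (if k ^ j ∣ s then A (s / k ^ j) * (1 - (w j) ^ (s / k ^ j)) else 0) with hc
  -- HasSum for each Gfun
  have hG : ∀ j : ℕ, ∀ ζ : ℂ, ‖ζ‖ < r →
      HasSum (fun s : ℕ =>
        (if k ^ j ∣ s then A (s / k ^ j) * (1 - (w j) ^ (s / k ^ j)) else 0) * ζ ^ s)
        (Gfun H k n j ζ) := by
    intro j ζ hζ
    have hkj : 0 < k ^ j := pow_pos hk0 j
    have habsw : ‖w j‖ = 1 := by
      have : -2 * (Real.pi : ℂ) * Complex.I / (k:ℂ) ^ (n - j)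
          = ((-2 * Real.pi / (k ^ (n - j) : ℕ) : ℝ) : ℂ) * Complex.I := by
        push_cast; ring
      rw [hw]; simp only [this]
      rw [Complex.norm_exp, Complex.mul_I_re, Complex.ofReal_im, neg_zero, Real.exp_zero]
    have h1 : ‖ζ ^ k ^ j‖ < 1 := by
      rw [norm_pow]
      exact pow_lt_one₀ (norm_nonneg _) (lt_trans hζ hr1) (by positivity)
    have h2 : ‖ζ ^ k ^ j * w j‖ < 1 := by
      rw [norm_mul, habsw, mul_one]; exact h1
    have hsub := (hH _ h1).sub (hH _ h2)
    have hinj : Function.Injective (fun m : ℕ => m * k ^ j) := fun a b h => by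
      simpa [Nat.mul_left_inj (by omega : k ^ j ≠ 0)] using h
    have hzero : ∀ s : ℕ, s ∉ Set.range (fun m : ℕ => m * k ^ j) →
        (if k ^ j ∣ s then A (s / k ^ j) * (1 - (w j) ^ (s / k ^ j)) else 0) * ζ ^ s = 0 := by
      intro s hs
      have hnd : ¬ k ^ j ∣ s := by
        rintro ⟨m, hm⟩
        exact hs ⟨m, by rw [hm]; ring⟩
      rw [if_neg hnd, zero_mul]
    refine (Function.Injective.hasSum_iff hinj hzero).mp ?_
    have hfeq : ((fun s : ℕ =>
        (if k ^ j ∣ s then A (s / k ^ j) * (1 - (w j) ^ (s / k ^ j)) else 0) * ζ ^ s)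
          ∘ (fun m : ℕ => m * k ^ j))
        = fun m : ℕ => A m * (ζ ^ k ^ j) ^ m - A m * (ζ ^ k ^ j * w j) ^ m := by
      funext m
      simp only [Function.comp_apply]
      rw [if_pos (dvd_mul_left (k ^ j) m), Nat.mul_div_cancel m hkj, mul_pow, ← pow_mul,
        mul_comm m (k ^ j), pow_mul]
      ring
    rw [hfeq]
    exact hsub
  -- HasSum for Ffun with coefficients c
  have hcF : ∀ ζ : ℂ, ‖ζ‖ < r → HasSum (fun s => c s * ζ ^ s) (Ffun H k lam n ζ) := by
    intro ζ hζ
    have hsum := hasSum_sum (s := Finset.range n)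
      (f := fun j s =>
        lam⁻¹ ^ (j + 1) * ((if k ^ j ∣ s then A (s / k ^ j) * (1 - (w j) ^ (s / k ^ j)) else 0)
          * ζ ^ s))
      (a := fun j => lam⁻¹ ^ (j + 1) * Gfun H k n j ζ)
      (fun j _ => (hG j ζ hζ).mul_left _)
    have hfe : (fun s => c s * ζ ^ s) = fun s => ∑ j ∈ Finset.range n,
        lam⁻¹ ^ (j + 1) * ((if k ^ j ∣ s then A (s / k ^ j) * (1 - (w j) ^ (s / k ^ j)) else 0)
          * ζ ^ s) := by
      funext s
      rw [hc, Finset.sum_mul]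
      exact Finset.sum_congr rfl fun j _ => (mul_assoc _ _ _)
    rw [hfe]
    unfold Ffun
    exact hsum
  -- uniqueness of coefficients
  have hBc : B n = c := aux_coeff_unique hr0 (hB n) hcF
  -- compute c (ν * k ^ (n-1))
  have hmem : n - 1 ∈ Finset.range n := Finset.mem_range.mpr (by omega)
  have hcval : c (ν * k ^ (n - 1)) = lam⁻¹ ^ n *
      (A ν * (1 - Complex.exp (-2 * Real.pi * Complex.I * ν / k))) := by
    simp only [hc]
    rw [Finset.sum_eq_single_of_mem (n - 1) hmem ?side]
    · rw [if_pos (dvd_mul_left (k ^ (n-1)) ν), Nat.mul_div_cancel ν (pow_pos hk0 _)]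
      have hn1 : n - 1 + 1 = n := by omega
      have hnn : n - (n - 1) = 1 := by omega
      have hwv : (w (n - 1)) ^ ν = Complex.exp (-2 * Real.pi * Complex.I * ν / k) := by
        rw [hw]
        simp only [hnn, pow_one]
        rw [← Complex.exp_nat_mul]
        congr 1
        ring
      rw [hwv, hn1]
    case side =>
      intro j hj hjne
      have hjlt : j < n - 1 := by
        have := Finset.mem_range.mp hj; omega
      have hdvd : k ^ j ∣ ν * k ^ (n - 1) := by
        refine Dvd.dvd.mul_left ?_ ν
        exact pow_dvd_pow k (by omega)
      rw [if_pos hdvd]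
      have hdiveq : ν * k ^ (n - 1) / k ^ j = ν * k ^ (n - 1 - j) := by
        have : ν * k ^ (n - 1) = ν * k ^ (n - 1 - j) * k ^ j := by
          rw [mul_assoc, ← pow_add]
          congr 2
          omega
        rw [this, Nat.mul_div_cancel _ (pow_pos hk0 j)]
      rw [hdiveq]
      have : A (ν * k ^ (n - 1 - j)) = 0 := by
        apply hA
        exact Dvd.dvd.mul_left (dvd_pow_self k (by omega)) ν
      rw [this, zero_mul, mul_zero]
  have hBval : B n (ν * k ^ (n - 1)) =
      lam⁻¹ ^ n * A ν * (1 - Complex.exp (-2 * Real.pi * Complex.I * ν / k)) := by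
    rw [hBc, hcval]; ring
  refine ⟨hBval, ?_⟩
  -- the lower bound
  set z : ℂ := Complex.exp (-2 * Real.pi * Complex.I * ν / k) with hz
  have hzk : z ^ k = 1 := by
    rw [hz, ← Complex.exp_nat_mul]
    have h1 : (k : ℂ) * (-2 * Real.pi * Complex.I * ν / k)
        = ((-(ν:ℤ)) : ℂ) * (2 * Real.pi * Complex.I) := by
      field_simp [hkC]
      push_cast
      ring
    rw [h1]
    exact_mod_cast Complex.exp_int_mul_two_pi_mul_I (-(ν:ℤ))
  have hzne : z ≠ 1 := by
    intro h
    rw [hz, Complex.exp_eq_one_iff] at h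
    obtain ⟨m, hm⟩ := h
    have h2pi : (2 * (Real.pi : ℂ) * Complex.I) ≠ 0 := by
      simp [Real.pi_ne_zero, Complex.I_ne_zero]
    have hm' : -2 * (Real.pi:ℂ) * Complex.I * ν = m * (2 * Real.pi * Complex.I) * k := by
      have := congrArg (· * (k:ℂ)) hm
      simpa [div_mul_cancel₀ _ hkC] using this
    have hcast : (2 * (Real.pi:ℂ) * Complex.I) * (ν : ℂ)
        = (2 * (Real.pi:ℂ) * Complex.I) * ((-m * k : ℤ) : ℂ) := by
      push_cast
      linear_combination -hm'
    have hνeq : (ν : ℂ) = ((-m * k : ℤ) : ℂ) := mul_left_cancel₀ h2pi hcast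
    have : (ν : ℤ) = -m * k := by exact_mod_cast hνeq
    exact hkν (Int.natCast_dvd_natCast.mp ⟨-m, by rw [this]; ring⟩)
  have hbound := aux_one_sub_bound hk hzk hzne
  rw [hBval, hz]
  rw [norm_mul, norm_mul, norm_pow, norm_inv]
  have hXnn : (0:ℝ) ≤ (‖lam‖)⁻¹ ^ n * ‖A ν‖ := by positivity
  calc (‖lam‖)⁻¹ ^ n * ‖A ν‖ / k
      = ((‖lam‖)⁻¹ ^ n * ‖A ν‖) * (1 / (k:ℝ)) := by ring
    _ ≤ ((‖lam‖)⁻¹ ^ n * ‖A ν‖) * ‖1 - z‖ :=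
        mul_le_mul_of_nonneg_left hbound hXnn
    _ = (‖lam‖)⁻¹ ^ n * ‖A ν‖ * ‖1 - z‖ := rfl
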